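/- Let d ≥ 1, let T : ℝ^d → [0,∞) be measurable, and let u > 0. Then, as an identity in [0,∞], u ∫_{{T<u}} T(η)^{-1} dη = |{η ∈ ℝ^d : T(η) < u}| + u ∫_0^u s^{-2} |{η ∈ ℝ^d : T(η) < s}| ds. -/

import Mathlib

open MeasureTheory Set ENNReal


lemma inv_sq_lintegral_pos {t u : ℝ} (ht : 0 < t) (htu : t ≤ u) :
    ∫⁻ s in Set.Ioo t u, (ENNReal.ofReal (s ^ 2))⁻¹ = ENNReal.ofReal (t⁻¹ - u⁻¹) := by
  have h1 : ∀ s ∈ Set.Ioo t u, (ENNReal.ofReal (s ^ 2))⁻¹ = ENNReal.ofReal ((s ^ 2)⁻¹) := by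
    intro s hs
    have hs0 : 0 < s := lt_trans ht hs.1
    rw [ENNReal.ofReal_inv_of_pos (by positivity : (0:ℝ) < s ^ 2)]
  rw [setLIntegral_congr_fun measurableSet_Ioo h1]
  have hint : IntegrableOn (fun s : ℝ => (s ^ 2)⁻¹) (Set.Ioo t u) := by
    apply (ContinuousOn.integrableOn_Icc ?_).mono_set Set.Ioo_subset_Icc_self
    apply ContinuousOn.inv₀ (by fun_prop)
    intro x hx
    have : 0 < x := lt_of_lt_of_le ht hx.1
    positivity
  rw [← ofReal_integral_eq_lintegral_ofReal hint]
  · congr 1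
    rw [← MeasureTheory.integral_Ioc_eq_integral_Ioo, ← intervalIntegral.integral_of_le htu]
    have hz : ∀ x : ℝ, (x ^ 2)⁻¹ = x ^ (-2 : ℤ) := by
      intro x; rw [zpow_neg, zpow_two]; ring_nf
    simp_rw [hz]
    rw [integral_zpow]
    · norm_num
      ring
    · right
      constructor
      · decide
      · intro h
        rcases h with h
        have := Set.mem_uIcc.mp h
        rcases this with ⟨h1, h2⟩ | ⟨h1, h2⟩ <;> nlinarith
  · exact Filter.Eventually.of_forall fun s => by positivity

lemma inv_sq_lintegral_top {u : ℝ} (hu : 0 < u) :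
    ∫⁻ s in Set.Ioo (0:ℝ) u, (ENNReal.ofReal (s ^ 2))⁻¹ = ⊤ := by
  by_contra h
  have hfin : (∫⁻ s in Set.Ioo (0:ℝ) u, (ENNReal.ofReal (s ^ 2))⁻¹) ≠ ⊤ := h
  have key : ∀ n : ℕ, ENNReal.ofReal n ≤ ∫⁻ s in Set.Ioo (0:ℝ) u, (ENNReal.ofReal (s ^ 2))⁻¹ := by
    intro n
    set t : ℝ := ((n : ℝ) + u⁻¹)⁻¹ with htdef
    have hpos : 0 < (n : ℝ) + u⁻¹ := by positivity
    have ht : 0 < t := by positivity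
    have htu : t ≤ u := by
      rw [htdef, inv_le_comm₀ hpos hu]
      exact le_add_of_nonneg_left (by positivity)
    have hsub : Set.Ioo t u ⊆ Set.Ioo 0 u := Set.Ioo_subset_Ioo (le_of_lt ht) le_rfl
    calc ENNReal.ofReal n = ENNReal.ofReal (t⁻¹ - u⁻¹) := by
            rw [htdef, inv_inv]; ring_nf
         _ = ∫⁻ s in Set.Ioo t u, (ENNReal.ofReal (s ^ 2))⁻¹ := (inv_sq_lintegral_pos ht htu).symm
         _ ≤ _ := lintegral_mono_set hsub
  have : ∀ n : ℕ, (n : ℝ) ≤ (∫⁻ s in Set.Ioo (0:ℝ) u, (ENNReal.ofReal (s ^ 2))⁻¹).toReal := by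
    intro n
    have := ENNReal.toReal_mono hfin (key n)
    rwa [ENNReal.toReal_ofReal (Nat.cast_nonneg n)] at this
  obtain ⟨n, hn⟩ := exists_nat_gt (∫⁻ s in Set.Ioo (0:ℝ) u, (ENNReal.ofReal (s ^ 2))⁻¹).toReal
  exact absurd (this n) (not_le.mpr hn)

lemma pointwise_id {t u : ℝ} (ht : 0 ≤ t) (htu : t < u) :
    ENNReal.ofReal u * (ENNReal.ofReal t)⁻¹
      = 1 + ∫⁻ s in Set.Ioo t u, ENNReal.ofReal u * (ENNReal.ofReal (s ^ 2))⁻¹ := by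
  have hu : 0 < u := lt_of_le_of_lt ht htu
  have hmeas : Measurable fun s : ℝ => (ENNReal.ofReal (s ^ 2))⁻¹ := by
    apply Measurable.inv
    exact ENNReal.measurable_ofReal.comp (by fun_prop)
  rw [lintegral_const_mul _ hmeas]
  rcases eq_or_lt_of_le ht with h0 | h0
  · rw [← h0]
    rw [inv_sq_lintegral_top hu]
    rw [ENNReal.ofReal_zero, ENNReal.inv_zero,
      ENNReal.mul_top (by simp [hu] : ENNReal.ofReal u ≠ 0)]
    simp
  · rw [inv_sq_lintegral_pos h0 htu.le]
    rw [← ENNReal.ofReal_inv_of_pos h0, ← ENNReal.ofReal_mul hu.le, ← ENNReal.ofReal_mul hu.le]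
    have hnn : 0 ≤ u * (t⁻¹ - u⁻¹) := by
      apply mul_nonneg hu.le
      rw [sub_nonneg]
      exact inv_anti₀ h0 htu.le
    rw [← ENNReal.ofReal_one, ← ENNReal.ofReal_add (by norm_num) hnn]
    congr 1
    field_simp
    ring

/-- The layer-cake style identity (in `[0,∞]`):
`u ∫_{{T<u}} T(η)⁻¹ dη = |{T < u}| + u ∫₀ᵘ s⁻² |{T < s}| ds`. -/
theorem G_layer_cake_identity
    (d : ℕ) (hd : 1 ≤ d)
    (T : EuclideanSpace ℝ (Fin d) → ℝ)
    (hT : Measurable T) (hT0 : ∀ η, 0 ≤ T η)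
    (u : ℝ) (hu : 0 < u) :
    ENNReal.ofReal u * ∫⁻ η in {η | T η < u}, (ENNReal.ofReal (T η))⁻¹
      = volume {η : EuclideanSpace ℝ (Fin d) | T η < u}
        + ENNReal.ofReal u *
          ∫⁻ s in Set.Ioo (0:ℝ) u,
            (ENNReal.ofReal (s ^ 2))⁻¹ *
              volume {η : EuclideanSpace ℝ (Fin d) | T η < s} := by
  set A : Set (EuclideanSpace ℝ (Fin d)) := {η | T η < u} with hA
  have hAm : MeasurableSet A := measurableSet_lt hT measurable_const
  have hginv : Measurable fun s : ℝ => (ENNReal.ofReal (s ^ 2))⁻¹ :=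
    (ENNReal.measurable_ofReal.comp (by fun_prop)).inv
  set g : ℝ → ℝ≥0∞ := fun s => ENNReal.ofReal u * (ENNReal.ofReal (s ^ 2))⁻¹ with hg
  have hgm : Measurable g := measurable_const.mul hginv
  -- Step 1: pull constant inside
  have hTinv : Measurable fun η : EuclideanSpace ℝ (Fin d) => (ENNReal.ofReal (T η))⁻¹ :=
    (ENNReal.measurable_ofReal.comp hT).inv
  rw [← lintegral_const_mul _ hTinv]
  -- Step 2: pointwise identity
  have step2 : ∫⁻ η in A, ENNReal.ofReal u * (ENNReal.ofReal (T η))⁻¹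
      = ∫⁻ η in A, (1 + ∫⁻ s in Set.Ioo (T η) u, g s) := by
    apply setLIntegral_congr_fun hAm
    exact fun η hη => pointwise_id (hT0 η) hη
  rw [step2, lintegral_add_left measurable_const, setLIntegral_one]
  congr 1
  -- Step 4: rewrite inner integral over Ioo 0 u with indicator
  have hIoo : ∀ η : EuclideanSpace ℝ (Fin d), Set.Ioo (T η) u = Set.Ioi (T η) ∩ Set.Ioo 0 u := by
    intro η
    ext s
    simp only [Set.mem_Ioo, Set.mem_inter_iff, Set.mem_Ioi]
    constructor
    · rintro ⟨h1, h2⟩; exact ⟨h1, lt_of_le_of_lt (hT0 η) h1, h2⟩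
    · rintro ⟨h1, _, h2⟩; exact ⟨h1, h2⟩
  have hS : MeasurableSet {p : EuclideanSpace ℝ (Fin d) × ℝ | T p.1 < p.2} :=
    measurableSet_lt (hT.comp measurable_fst) measurable_snd
  have hFm : Measurable (fun p : EuclideanSpace ℝ (Fin d) × ℝ =>
      Set.indicator {p : EuclideanSpace ℝ (Fin d) × ℝ | T p.1 < p.2} (fun q => g q.2) p) :=
    (hgm.comp measurable_snd).indicator hS
  have step4 : ∀ η : EuclideanSpace ℝ (Fin d), ∫⁻ s in Set.Ioo (T η) u, g s
      = ∫⁻ s in Set.Ioo (0:ℝ) u,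
          Set.indicator {p : EuclideanSpace ℝ (Fin d) × ℝ | T p.1 < p.2} (fun q => g q.2) (η, s) := by
    intro η
    have : (fun s : ℝ => Set.indicator {p : EuclideanSpace ℝ (Fin d) × ℝ | T p.1 < p.2} (fun q => g q.2) (η, s))
        = Set.indicator (Set.Ioi (T η)) g := by
      ext s
      simp [Set.indicator, Set.mem_Ioi, Set.mem_setOf_eq]
    rw [this, lintegral_indicator measurableSet_Ioi, Measure.restrict_restrict measurableSet_Ioi,
      ← hIoo η]
  simp_rw [step4]
  -- Step 5: Tonelli
  rw [lintegral_lintegral_swap hFm.aemeasurable]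
  -- Step 6: compute inner integral in η
  have hvol_mono : Monotone fun s : ℝ => volume {η : EuclideanSpace ℝ (Fin d) | T η < s} := by
    intro s t hst
    exact measure_mono (fun η hη => lt_of_lt_of_le hη hst)
  have hvm : Measurable fun s : ℝ => volume {η : EuclideanSpace ℝ (Fin d) | T η < s} := hvol_mono.measurable
  rw [← lintegral_const_mul (f := fun s : ℝ => (ENNReal.ofReal (s ^ 2))⁻¹ * volume {η : EuclideanSpace ℝ (Fin d) | T η < s}) _ (hginv.mul hvm)]
  apply setLIntegral_congr_fun measurableSet_Ioo
  intro s hs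
  beta_reduce
  have hsec : (fun η : EuclideanSpace ℝ (Fin d) => Set.indicator {p : EuclideanSpace ℝ (Fin d) × ℝ | T p.1 < p.2} (fun q => g q.2) (η, s))
      = Set.indicator {η : EuclideanSpace ℝ (Fin d) | T η < s} (fun _ => g s) := by
    ext η
    simp [Set.indicator, Set.mem_setOf_eq]
  rw [hsec, lintegral_indicator (measurableSet_lt hT measurable_const),
    Measure.restrict_restrict (measurableSet_lt hT measurable_const), setLIntegral_const]
  have hsub : {η : EuclideanSpace ℝ (Fin d) | T η < s} ∩ A = {η : EuclideanSpace ℝ (Fin d) | T η < s} := by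
    apply Set.inter_eq_self_of_subset_left
    intro η hη
    exact lt_trans hη hs.2
  rw [hsub, hg]
  ring
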